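/- Let Φ be proper, convex, lsc on a Hilbert space with argmin Φ ≠ ∅, and let λ, ε: [t₀,∞) → (0,∞) with λ(t)ε(t) → 0 and ε(t) → 0 as t → ∞. Let x_{ε(t),λ(t)} minimize x ↦ Φ_{λ(t)}(x) + (ε(t)/2)‖x‖². Then x_{ε(t),λ(t)} converges strongly to the minimal norm element x* of argmin Φ as t → ∞. -/

import Mathlib

open Filter Topology Set

noncomputable def moreau {H : Type*} [NormedAddCommGroup H] [InnerProductSpace ℝ H]
    (Φ : H → ℝ) (l : ℝ) (x : H) : ℝ :=
  ⨅ y : H, (Φ y + ‖x - y‖ ^ 2 / (2 * l))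

section AuxTikhonov

variable {H : Type*} [NormedAddCommGroup H] [InnerProductSpace ℝ H]

lemma tikhonov_mid_norm_sq (y z : H) :
    ‖(2⁻¹:ℝ)•y + (2⁻¹:ℝ)•z‖^2 = (‖y‖^2 + ‖z‖^2)/2 - ‖y - z‖^2/4 := by
  have h1 : (2⁻¹:ℝ)•y + (2⁻¹:ℝ)•z = (2⁻¹:ℝ)•(y+z) := (smul_add _ _ _).symm
  have h2 : ‖y + z‖^2 = ‖y‖^2 + 2 * (inner ℝ y z : ℝ) + ‖z‖^2 := norm_add_sq_real y z
  have h3 : ‖y - z‖^2 = ‖y‖^2 - 2 * (inner ℝ y z : ℝ) + ‖z‖^2 := norm_sub_sq_real y z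
  have h4 : ‖(2⁻¹:ℝ)•(y+z)‖ = 2⁻¹ * ‖y + z‖ := by rw [norm_smul]; norm_num
  rw [h1, h4, mul_pow, h2, h3]; ring

lemma tikhonov_quad_identity (L E : ℝ) (hL : 0 < L) (hE : 0 < E) (x y : H) :
    ‖x - y‖^2/(2*L) + E/2*‖x‖^2
      = E/(2*(1+L*E))*‖y‖^2 + (1+L*E)/(2*L)*‖x - ((1+L*E)⁻¹:ℝ)•y‖^2 := by
  have hk : (0:ℝ) < 1 + L*E := by positivity
  have h1 : ‖x - y‖^2 = ‖x‖^2 - 2*(inner ℝ x y : ℝ) + ‖y‖^2 := norm_sub_sq_real x y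
  have h2 : ‖x - ((1+L*E)⁻¹:ℝ)•y‖^2
      = ‖x‖^2 - 2*((1+L*E)⁻¹*(inner ℝ x y : ℝ)) + ((1+L*E)⁻¹)^2*‖y‖^2 := by
    rw [norm_sub_sq_real, real_inner_smul_right, norm_smul]
    rw [Real.norm_eq_abs, abs_of_pos (inv_pos.2 hk)]
    ring
  rw [h1, h2]
  field_simp
  ring

lemma tikhonov_exists_prox [CompleteSpace H] (Φ : H → ℝ)
    (hconv : ConvexOn ℝ Set.univ Φ) (hlsc : LowerSemicontinuous Φ)
    (B : ℝ) (hB : ∀ y, B ≤ Φ y) {c : ℝ} (hc : 0 < c) :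
    ∃ p : H, ∀ y, Φ p + c*‖p‖^2 + c/2*‖y - p‖^2 ≤ Φ y + c*‖y‖^2 := by
  set f : H → ℝ := fun y => Φ y + c*‖y‖^2 with hf
  clear_value f
  have hfB : ∀ y, B ≤ f y := by
    intro y
    have : (0:ℝ) ≤ c*‖y‖^2 := by positivity
    simp only [hf]; linarith [hB y]
  have hbdd : BddBelow (Set.range f) := ⟨B, by rintro _ ⟨y, rfl⟩; exact hfB y⟩
  set m := ⨅ y, f y with hm
  clear_value m
  have hml : ∀ y, m ≤ f y := by
    intro y; rw [hm]; exact ciInf_le hbdd y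
  have hmid : ∀ y z : H, f ((2⁻¹:ℝ)•y + (2⁻¹:ℝ)•z) ≤ (f y + f z)/2 - c/4*‖y - z‖^2 := by
    intro y z
    have hΦ := hconv.2 (mem_univ y) (mem_univ z) (by norm_num : (0:ℝ) ≤ 2⁻¹)
      (by norm_num : (0:ℝ) ≤ 2⁻¹) (by norm_num : (2⁻¹:ℝ)+2⁻¹ = 1)
    have hn := tikhonov_mid_norm_sq y z
    simp only [hf, smul_eq_mul] at *
    nlinarith [hΦ, hn, hc]
  have hseq : ∀ n : ℕ, ∃ y, f y < m + 1/(n+1) := by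
    intro n
    have h1 : iInf f < m + 1/((n:ℝ)+1) := by
      rw [← hm]
      have : (0:ℝ) < 1/((n:ℝ)+1) := by positivity
      linarith
    exact exists_lt_of_ciInf_lt h1
  choose y hy using hseq
  have hcauchy : CauchySeq y := by
    refine cauchySeq_of_le_tendsto_0 (fun N => Real.sqrt (4/c * (1/(N+1)))) ?_ ?_
    · intro n mm N hn hm'
      rw [dist_eq_norm, Real.le_sqrt (norm_nonneg _) (by positivity)]
      have h1 := hmid (y n) (y mm)
      have h2 := hml ((2⁻¹:ℝ)•(y n) + (2⁻¹:ℝ)•(y mm))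
      have h3 := hy n; have h4 := hy mm
      have hNn : ((N:ℝ)+1) ≤ ((n:ℝ)+1) := by
        have := (Nat.cast_le (α := ℝ)).2 hn; linarith
      have hNm : ((N:ℝ)+1) ≤ ((mm:ℝ)+1) := by
        have := (Nat.cast_le (α := ℝ)).2 hm'; linarith
      have h5 : 1/((n:ℝ)+1) ≤ 1/((N:ℝ)+1) := by
        apply one_div_le_one_div_of_le (by positivity) hNn
      have h6 : 1/((mm:ℝ)+1) ≤ 1/((N:ℝ)+1) := by
        apply one_div_le_one_div_of_le (by positivity) hNm
      rw [div_mul_eq_mul_div, le_div_iff₀ hc]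
      have h7 : (0:ℝ) < (N:ℝ)+1 := by positivity
      nlinarith [h1, h2, h3, h4]
    · have h0 : Tendsto (fun N:ℕ => 4/c * (1/((N:ℝ)+1))) atTop (𝓝 0) := by
        simpa using tendsto_one_div_add_atTop_nhds_zero_nat.const_mul (4/c)
      have := (Real.continuous_sqrt.tendsto 0).comp h0
      simpa [Function.comp_def] using this
  obtain ⟨p, hp⟩ := cauchySeq_tendsto_of_complete hcauchy
  have hflsc : LowerSemicontinuous f := by
    rw [hf]
    exact hlsc.add ((continuous_const.mul ((continuous_norm).pow 2)).lowerSemicontinuous)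
  have hfpm : f p ≤ m := by
    by_contra h
    push_neg at h
    set b := (m + f p)/2 with hb
    clear_value b
    have hblt : b < f p := by simp only [hb]; linarith
    have hev : ∀ᶠ n in atTop, b < f (y n) := hp.eventually (hflsc p b hblt)
    have hb2 : b ≤ m := by
      have htm : Tendsto (fun n : ℕ => m + 1/((n:ℝ)+1)) atTop (𝓝 m) := by
        simpa using (tendsto_const_nhds (x := m)).add tendsto_one_div_add_atTop_nhds_zero_nat
      apply ge_of_tendsto htm
      filter_upwards [hev] with n hn
      linarith [hy n]
    simp only [hb] at hb2; linarith
  refine ⟨p, fun z => ?_⟩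
  have h1 := hmid p z
  have h2 := hml ((2⁻¹:ℝ)•p + (2⁻¹:ℝ)•z)
  have h3 : ‖z - p‖ = ‖p - z‖ := norm_sub_rev _ _
  simp only [hf] at h1 h2 hfpm ⊢
  rw [h3]
  nlinarith [h1, h2, hfpm]

end AuxTikhonov

set_option maxHeartbeats 1600000 in
/-- If λ(t)ε(t) → 0 and ε(t) → 0, the Tikhonov-regularized minimizers converge strongly to
the minimal-norm minimizer of Φ. -/
theorem tikhonov_strong_convergence {H : Type*} [NormedAddCommGroup H]
    [InnerProductSpace ℝ H] [CompleteSpace H] (Φ : H → ℝ)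
    (hconv : ConvexOn ℝ Set.univ Φ) (hlsc : LowerSemicontinuous Φ)
    (t₀ : ℝ) (l ε : ℝ → ℝ) (hl : ∀ t ≥ t₀, 0 < l t) (hε : ∀ t ≥ t₀, 0 < ε t)
    (hle : Filter.Tendsto (fun t => l t * ε t) Filter.atTop (nhds 0))
    (hε0 : Filter.Tendsto ε Filter.atTop (nhds 0))
    (xel : ℝ → H)
    (hxel : ∀ t ≥ t₀,
      IsMinOn (fun x => moreau Φ (l t) x + ε t / 2 * ‖x‖ ^ 2) Set.univ (xel t))
    (xstar : H) (hxstar : IsMinOn Φ Set.univ xstar)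
    (hmin : ∀ y, IsMinOn Φ Set.univ y → ‖xstar‖ ≤ ‖y‖) :
    Filter.Tendsto xel Filter.atTop (nhds xstar) := by
  have hΦlb : ∀ y, Φ xstar ≤ Φ y := fun y => isMinOn_iff.mp hxstar y (mem_univ y)
  -- choose prox points
  have hex : ∀ c : ℝ, 0 < c → ∃ p : H, ∀ y, Φ p + c*‖p‖^2 + c/2*‖y - p‖^2 ≤ Φ y + c*‖y‖^2 :=
    fun c hc => tikhonov_exists_prox Φ hconv hlsc (Φ xstar) hΦlb hc
  choose! q hq using hex
  -- norm bound
  have hnb : ∀ c, 0 < c → ‖q c‖ ≤ ‖xstar‖ := by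
    intro c hc
    have h1 := hq c hc xstar
    have h2 := hΦlb (q c)
    have hsq : ‖q c‖^2 ≤ ‖xstar‖^2 := by
      nlinarith [h1, h2, hc, mul_nonneg hc.le (sq_nonneg ‖xstar - q c‖)]
    nlinarith [hsq, norm_nonneg (q c), norm_nonneg xstar]
  -- monotonicity of norms and pair bound
  have hmono : ∀ c c', 0 < c → c ≤ c' → ‖q c'‖^2 ≤ ‖q c‖^2 := by
    intro c c' hc hcc'
    rcases eq_or_lt_of_le hcc' with rfl | hlt
    · exact le_refl _
    · have h1 := hq c hc (q c')
      have h2 := hq c' (lt_trans hc hlt) (q c)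
      have hrev : ‖q c - q c'‖ = ‖q c' - q c‖ := norm_sub_rev _ _
      rw [hrev] at h2
      have hsum : (c+c')/2 * ‖q c' - q c‖^2 ≤ (c'-c)*(‖q c‖^2 - ‖q c'‖^2) := by
        nlinarith [h1, h2]
      nlinarith [hsum, sq_nonneg ‖q c' - q c‖, hc, hlt,
        mul_nonneg (by linarith : (0:ℝ) ≤ (c+c')/2) (sq_nonneg ‖q c' - q c‖)]
  have hpair : ∀ c c', 0 < c → c ≤ c' → ‖q c - q c'‖^2 ≤ 2*(‖q c‖^2 - ‖q c'‖^2) := by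
    intro c c' hc hcc'
    rcases eq_or_lt_of_le hcc' with rfl | hlt
    · simp
    · have h1 := hq c hc (q c')
      have h2 := hq c' (lt_trans hc hlt) (q c)
      have hrev : ‖q c' - q c‖ = ‖q c - q c'‖ := norm_sub_rev _ _
      rw [← hrev] at h2
      have hn := hmono c c' hc (le_of_lt hlt)
      have hsum : (c+c')/2 * ‖q c' - q c‖^2 ≤ (c'-c)*(‖q c‖^2 - ‖q c'‖^2) := by
        nlinarith [h1, h2]
      rw [← hrev]
      have hX : (0:ℝ) ≤ ‖q c‖^2 - ‖q c'‖^2 := by linarith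
      nlinarith [hsum, hX, hc, hlt, sq_nonneg ‖q c' - q c‖,
        mul_nonneg (by linarith : (0:ℝ) ≤ 2*c) hX]
  -- Cauchy along 𝓝[>] 0
  set ns : ℝ → ℝ := fun c => ‖q c‖^2 with hns
  set S : Set ℝ := ns '' Ioi 0 with hS
  have hSne : S.Nonempty := ⟨ns 1, ⟨1, by norm_num, rfl⟩⟩
  have hSbdd : BddAbove S := by
    refine ⟨‖xstar‖^2, ?_⟩
    rintro _ ⟨c, hc, rfl⟩
    have := hnb c hc
    simp only [hns]
    nlinarith [norm_nonneg (q c)]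
  set Lsup := sSup S with hL
  have hQcauchy : Cauchy (Filter.map q (𝓝[>] (0:ℝ))) := by
    rw [Metric.cauchy_iff]
    refine ⟨Filter.map_neBot, fun r hr => ?_⟩
    have hη : Lsup - r^2/8 < Lsup := by nlinarith
    obtain ⟨_, ⟨c₁, hc₁, rfl⟩, hlt⟩ := exists_lt_of_lt_csSup hSne hη
    refine ⟨q '' (Ioc 0 c₁), image_mem_map (Ioc_mem_nhdsGT_of_mem ⟨le_refl 0, hc₁⟩), ?_⟩
    have key : ∀ a b : ℝ, a ∈ Ioc 0 c₁ → b ∈ Ioc 0 c₁ → a ≤ b → ‖q a - q b‖ < r := by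
      intro a b ha hb hab
      have h1 := hpair a b ha.1 hab
      have h2 : ns c₁ ≤ ns b := hmono b c₁ hb.1 hb.2
      have h3 : ns a ≤ Lsup := by
        rw [hL]; exact le_csSup hSbdd ⟨a, ha.1, rfl⟩
      simp only [hns] at h1 h2 h3 hlt
      nlinarith [norm_nonneg (q a - q b), hr]
    rintro _ ⟨a, ha, rfl⟩ _ ⟨b, hb, rfl⟩
    rw [dist_eq_norm]
    rcases le_total a b with h|h
    · exact key a b ha hb h
    · rw [norm_sub_rev]; exact key b a hb ha h
  obtain ⟨pb, hpb⟩ := CompleteSpace.complete hQcauchy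
  have hqt : Tendsto q (𝓝[>] (0:ℝ)) (𝓝 pb) := hpb
  have hc0 : Tendsto (fun c : ℝ => c) (𝓝[>] (0:ℝ)) (𝓝 0) :=
    tendsto_id.mono_left nhdsWithin_le_nhds
  -- pb = xstar
  have hpbnorm : ‖pb‖ ≤ ‖xstar‖ := by
    refine le_of_tendsto hqt.norm ?_
    filter_upwards [self_mem_nhdsWithin] with c hc
    exact hnb c hc
  have hΦqb : ∀ᶠ c in (𝓝[>] (0:ℝ)), Φ (q c) ≤ Φ xstar + c*‖xstar‖^2 := by
    filter_upwards [self_mem_nhdsWithin] with c hc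
    have h1 := hq c hc xstar
    have hc' : (0:ℝ) < c := hc
    nlinarith [norm_nonneg (q c), sq_nonneg ‖xstar - q c‖, sq_nonneg ‖q c‖]
  have hΦpb : Φ pb ≤ Φ xstar := by
    by_contra hcon
    push_neg at hcon
    have hb : (Φ xstar + Φ pb)/2 < Φ pb := by linarith
    have h1 : ∀ᶠ c in (𝓝[>] (0:ℝ)), (Φ xstar + Φ pb)/2 < Φ (q c) :=
      hqt.eventually (hlsc pb _ hb)
    have h2 : ∀ᶠ c in (𝓝[>] (0:ℝ)), c*‖xstar‖^2 < (Φ pb - Φ xstar)/2 := by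
      have ht : Tendsto (fun c:ℝ => c*‖xstar‖^2) (𝓝[>] (0:ℝ)) (𝓝 0) := by
        simpa using hc0.mul_const (‖xstar‖^2)
      exact ht.eventually_lt_const (by linarith)
    obtain ⟨c, hc1, hc2, hc3⟩ := (h1.and (h2.and hΦqb)).exists
    linarith
  have hpbmin : IsMinOn Φ Set.univ pb :=
    isMinOn_iff.mpr fun y _ => hΦpb.trans (hΦlb y)
  have hsx : ‖xstar‖ ≤ ‖pb‖ := hmin pb hpbmin
  have hpbx : pb = xstar := by
    set mdp := (2⁻¹:ℝ)•pb + (2⁻¹:ℝ)•xstar with hmdp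
    have hΦm : Φ mdp ≤ Φ xstar := by
      have h := hconv.2 (mem_univ pb) (mem_univ xstar) (by norm_num : (0:ℝ) ≤ 2⁻¹)
        (by norm_num : (0:ℝ) ≤ 2⁻¹) (by norm_num : (2⁻¹:ℝ)+2⁻¹ = 1)
      rw [← hmdp] at h
      simp only [smul_eq_mul] at h
      nlinarith [hΦpb]
    have hmmin : IsMinOn Φ Set.univ mdp :=
      isMinOn_iff.mpr fun y _ => hΦm.trans (hΦlb y)
    have h1 : ‖xstar‖ ≤ ‖mdp‖ := hmin mdp hmmin
    have h2 := tikhonov_mid_norm_sq pb xstar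
    rw [← hmdp] at h2
    have h1' : ‖xstar‖^2 ≤ ‖mdp‖^2 := by nlinarith [norm_nonneg xstar]
    have h3' : ‖pb‖^2 ≤ ‖xstar‖^2 := by nlinarith [norm_nonneg pb]
    have hd : ‖pb - xstar‖ = 0 := by nlinarith [norm_nonneg (pb - xstar)]
    exact sub_eq_zero.mp (norm_eq_zero.mp hd)
  -- identification of xel t
  have hid : ∀ t ≥ t₀, xel t = ((1 + l t * ε t)⁻¹ : ℝ) • q (ε t / (2*(1 + l t * ε t))) := by
    intro t ht
    have hL := hl t ht
    have hE := hε t ht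
    obtain ⟨k, hk⟩ : ∃ k : ℝ, k = 1 + l t * ε t := ⟨_, rfl⟩
    have hk0 : (0:ℝ) < k := by rw [hk]; positivity
    obtain ⟨c, hcdef⟩ : ∃ c : ℝ, c = ε t / (2*k) := ⟨_, rfl⟩
    have hc : 0 < c := by rw [hcdef]; positivity
    obtain ⟨Q, hQdef⟩ : ∃ Q : H, Q = q c := ⟨_, rfl⟩
    have hQ : ∀ y, Φ Q + c*‖Q‖^2 + c/2*‖y - Q‖^2 ≤ Φ y + c*‖y‖^2 := by
      rw [hQdef]; exact hq c hc
    obtain ⟨x', hx'⟩ : ∃ x' : H, x' = (k⁻¹:ℝ) • Q := ⟨_, rfl⟩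
    obtain ⟨K, hK⟩ : ∃ K : ℝ, K = Φ Q + c*‖Q‖^2 := ⟨_, rfl⟩
    have hbdd : BddBelow (Set.range fun y => Φ y + ‖x' - y‖^2/(2*(l t))) := by
      refine ⟨Φ xstar, ?_⟩
      rintro _ ⟨y, rfl⟩
      have h1 := hΦlb y
      have h2 : (0:ℝ) ≤ ‖x' - y‖^2/(2*(l t)) := by positivity
      linarith
    have hid2 := fun (x y : H) => tikhonov_quad_identity (l t) (ε t) hL hE x y
    have hgx' : moreau Φ (l t) x' + ε t/2*‖x'‖^2 ≤ K := by
      have h1 : moreau Φ (l t) x' ≤ Φ Q + ‖x' - Q‖^2/(2*(l t)) := ciInf_le hbdd Q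
      have h2 := hid2 x' Q
      rw [← hk] at h2
      have h3 : x' - (k⁻¹:ℝ)•Q = 0 := by rw [hx']; exact sub_self _
      rw [h3, norm_zero] at h2
      have h4 : ‖x' - Q‖^2/(2*(l t)) + ε t/2*‖x'‖^2 = c*‖Q‖^2 := by
        rw [h2, hcdef]; ring
      rw [hK]
      linarith
    have hmin_t : moreau Φ (l t) (xel t) + ε t/2*‖xel t‖^2
        ≤ moreau Φ (l t) x' + ε t/2*‖x'‖^2 :=
      isMinOn_iff.mp (hxel t ht) x' (mem_univ x')
    have hkey : ∀ δ : ℝ, 0 < δ → ‖xel t - x'‖^2 ≤ (4*(l t)/k + 4/(k^2*c)) * δ := by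
      intro δ hδ
      have hlt : iInf (fun y => Φ y + ‖xel t - y‖^2/(2*(l t))) < K - ε t/2*‖xel t‖^2 + δ := by
        have h0 : moreau Φ (l t) (xel t) + ε t/2*‖xel t‖^2 ≤ K := le_trans hmin_t hgx'
        have heq : moreau Φ (l t) (xel t) = ⨅ y, (Φ y + ‖xel t - y‖^2/(2*(l t))) := rfl
        rw [← heq]
        linarith
      obtain ⟨y, hy⟩ := exists_lt_of_ciInf_lt hlt
      have hid3 := hid2 (xel t) y
      rw [← hk] at hid3
      have hqy := hQ y
      rw [← hcdef] at hid3
      -- hid3 : ‖xel t - y‖^2/(2*l t) + ε t/2*‖xel t‖^2 = c*‖y‖^2 + k/(2*l t)*‖xel t - k⁻¹•y‖^2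
      have hb1 : (k/(2*(l t))) * ‖xel t - (k⁻¹:ℝ)•y‖^2 < δ := by
        rw [hK] at hy
        nlinarith [hy, hid3, hqy, sq_nonneg ‖y - Q‖, hc,
          mul_nonneg hc.le (sq_nonneg ‖y - Q‖)]
      have hb2 : c/2 * ‖y - Q‖^2 < δ := by
        rw [hK] at hy
        nlinarith [hy, hid3, hqy, sq_nonneg ‖xel t - (k⁻¹:ℝ)•y‖, hk0, hL,
          mul_nonneg (le_of_lt (div_pos hk0 (by positivity : (0:ℝ) < 2*(l t))))
            (sq_nonneg ‖xel t - (k⁻¹:ℝ)•y‖)]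
      have htri : ‖xel t - x'‖^2 ≤ 2*‖xel t - (k⁻¹:ℝ)•y‖^2 + 2*‖(k⁻¹:ℝ)•(y - Q)‖^2 := by
        have h := norm_add_le (xel t - (k⁻¹:ℝ)•y) ((k⁻¹:ℝ)•(y-Q))
        have heq : (xel t - (k⁻¹:ℝ)•y) + (k⁻¹:ℝ)•(y-Q) = xel t - x' := by
          rw [hx', smul_sub]; abel
        rw [heq] at h
        have hmm := mul_le_mul h h (norm_nonneg (xel t - x'))
          (by positivity : (0:ℝ) ≤ ‖xel t - (k⁻¹:ℝ)•y‖ + ‖(k⁻¹:ℝ)•(y-Q)‖)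
        nlinarith [hmm, sq_nonneg (‖xel t - (k⁻¹:ℝ)•y‖ - ‖(k⁻¹:ℝ)•(y-Q)‖)]
      have hsm : ‖(k⁻¹:ℝ)•(y-Q)‖^2 = (k⁻¹)^2*‖y-Q‖^2 := by
        rw [norm_smul, Real.norm_eq_abs, abs_of_pos (inv_pos.2 hk0), mul_pow]
      rw [hsm] at htri
      have e1 : ‖xel t - (k⁻¹:ℝ)•y‖^2 < 2*(l t)*δ/k := by
        rw [lt_div_iff₀ hk0]
        have h2lt : (0:ℝ) < 2*(l t) := by positivity
        have h3 := mul_lt_mul_of_pos_left hb1 h2lt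
        have hsimp : 2*(l t) * ((k/(2*(l t))) * ‖xel t - (k⁻¹:ℝ)•y‖^2)
            = ‖xel t - (k⁻¹:ℝ)•y‖^2 * k := by
          field_simp
        rwa [hsimp] at h3
      have e2 : ‖y - Q‖^2 < 2*δ/c := by
        rw [lt_div_iff₀ hc]
        nlinarith [hb2, hc]
      have hkinv : (0:ℝ) < (k⁻¹)^2 := by positivity
      have e3 : (k⁻¹)^2*‖y-Q‖^2 ≤ (k⁻¹)^2*(2*δ/c) :=
        mul_le_mul_of_nonneg_left (le_of_lt e2) (le_of_lt hkinv)
      have e4 : (k⁻¹)^2*(2*δ/c) = 2*δ/(k^2*c) := by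
        field_simp
      calc ‖xel t - x'‖^2 ≤ 2*‖xel t - (k⁻¹:ℝ)•y‖^2 + 2*((k⁻¹)^2*‖y-Q‖^2) := htri
        _ ≤ 2*(2*(l t)*δ/k) + 2*(2*δ/(k^2*c)) := by
            rw [← e4]; nlinarith [e1, e3]
        _ = (4*(l t)/k + 4/(k^2*c)) * δ := by field_simp; ring
    have hC : (0:ℝ) < 4*(l t)/k + 4/(k^2*c) := by positivity
    have hz : ‖xel t - x'‖^2 ≤ 0 := by
      by_contra hzz
      push_neg at hzz
      have h := hkey (‖xel t - x'‖^2 / (2*(4*(l t)/k + 4/(k^2*c)))) (by positivity)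
      have : (4*(l t)/k + 4/(k^2*c)) * (‖xel t - x'‖^2 / (2*(4*(l t)/k + 4/(k^2*c))))
          = ‖xel t - x'‖^2/2 := by
        rw [mul_div_assoc', div_eq_div_iff
          (by positivity : (0:ℝ) < 2*(4*(l t)/k + 4/(k^2*c))).ne' (two_ne_zero)]
        ring
      rw [this] at h
      linarith
    have hd : ‖xel t - x'‖ = 0 := by nlinarith [norm_nonneg (xel t - x')]
    have hxx : xel t = x' := sub_eq_zero.mp (norm_eq_zero.mp hd)
    rw [hxx, hx', hQdef, hcdef, hk]
  -- assemble limits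
  have hk1 : Tendsto (fun t => 1 + l t * ε t) atTop (𝓝 1) := by
    simpa using tendsto_const_nhds.add hle
  have hct : Tendsto (fun t => ε t / (2*(1 + l t * ε t))) atTop (𝓝 0) := by
    have h2 : Tendsto (fun t => 2*(1 + l t * ε t)) atTop (𝓝 2) := by
      simpa using hk1.const_mul 2
    have := hε0.div h2 (by norm_num)
    simpa [Pi.div_def] using this
  have hctF : Tendsto (fun t => ε t / (2*(1 + l t * ε t))) atTop (𝓝[>] (0:ℝ)) := by
    rw [tendsto_nhdsWithin_iff]
    refine ⟨hct, ?_⟩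
    filter_upwards [eventually_ge_atTop t₀] with t ht
    have := hl t ht; have := hε t ht
    have : (0:ℝ) < 1 + l t * ε t := by positivity
    exact div_pos (hε t ht) (by positivity)
  have hqc : Tendsto (fun t => q (ε t / (2*(1 + l t * ε t)))) atTop (𝓝 xstar) := by
    have := hqt.comp hctF
    rwa [hpbx] at this
  have hsc : Tendsto (fun t => ((1 + l t * ε t)⁻¹ : ℝ)) atTop (𝓝 1) := by
    have := hk1.inv₀ (one_ne_zero)
    simpa using this
  have hfin : Tendsto (fun t => ((1 + l t * ε t)⁻¹:ℝ) • q (ε t / (2*(1 + l t * ε t))))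
      atTop (𝓝 xstar) := by
    have := hsc.smul hqc
    simpa using this
  refine hfin.congr' ?_
  filter_upwards [eventually_ge_atTop t₀] with t ht
  exact (hid t ht).symm
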